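/- Let p be a prime and s ≥ 1 an integer, and regard M(p^s) as a matrix over ℚ. Then M(p^s) is invertible, every row sum of M(p^s)⁻¹ equals −p^{1−s}, and the sum of all entries of M(p^s)⁻¹ equals −p. -/

import Mathlib

/-- `M(p^s)`: the `p^s × p^s` matrix over `ℚ` whose `(i,j)` entry is `−p^{2s−1}` if `i = j`
and `p^{2ν_p(i−j)}` otherwise, where `ν_p` is the `p`-adic valuation. -/
def Mpr (p s : ℕ) : Matrix (Fin (p ^ s)) (Fin (p ^ s)) ℚ := fun i j =>
  if i = j then -(p : ℚ) ^ (2 * s - 1)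
  else (p : ℚ) ^ (2 * padicValInt p ((i : ℤ) - (j : ℤ)))

-- transfer lemma
lemma valtrans {p : ℕ} [hp : Fact p.Prime] {s : ℕ} {a : ℤ} {b : ℕ}
    (hb0 : 0 < b) (hbs : b < p ^ s) (hdvd : (p : ℤ) ^ s ∣ a - b) (ha : a ≠ 0) :
    padicValInt p a = padicValNat p b := by
  set t := padicValNat p b with ht
  have hbne : b ≠ 0 := hb0.ne'
  have htlt : t < s := by
    have h1 : p ^ t ∣ b := pow_padicValNat_dvd
    have h2 : p ^ t ≤ b := Nat.le_of_dvd hb0 h1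
    have := lt_of_le_of_lt h2 hbs
    exact (Nat.pow_lt_pow_iff_right hp.out.one_lt).mp this
  have hdvdb : (p : ℤ) ^ t ∣ (b : ℤ) := by exact_mod_cast pow_padicValNat_dvd
  have hps : (p : ℤ) ^ t ∣ (p : ℤ) ^ s := pow_dvd_pow _ htlt.le
  have hle : t ≤ padicValInt p a := by
    have : (p : ℤ) ^ t ∣ a := by
      have : (p : ℤ) ^ t ∣ (a - b) + b := dvd_add (dvd_trans hps hdvd) hdvdb
      simpa using this
    rcases (padicValInt_dvd_iff t a).mp this with h | h
    · exact absurd h ha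
    · exact h
  have hge : padicValInt p a ≤ t := by
    by_contra hlt
    push_neg at hlt
    have h1 : (p : ℤ) ^ (t + 1) ∣ a := dvd_trans (pow_dvd_pow _ hlt) (padicValInt_dvd a)
    have h2 : (p : ℤ) ^ (t + 1) ∣ (b : ℤ) := by
      have h3 : (p : ℤ) ^ (t + 1) ∣ (p : ℤ) ^ s := pow_dvd_pow _ htlt
      have := dvd_sub h1 (dvd_trans h3 hdvd)
      simpa using this
    have h4 : p ^ (t + 1) ∣ b := by exact_mod_cast h2
    exact (pow_succ_padicValNat_not_dvd hbne) h4
  omega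

lemma fin_sub_modeq (n : ℕ) [NeZero n] (i j : Fin n) :
    (n : ℤ) ∣ ((i : ℤ) - (j : ℤ)) - ((i - j : Fin n).val : ℤ) := by
  have h : (i - j : Fin n).val = (n - j.val + i.val) % n := by
    rw [Fin.sub_def]
  have hj : j.val ≤ n := j.isLt.le
  rw [h]
  have hc : (((n - j.val + i.val) % n : ℕ) : ℤ) = ((n : ℤ) - j.val + i.val) % n := by
    push_cast [Nat.cast_sub hj]
    ring_nf
  rw [hc]
  have h2 := Int.emod_add_mul_ediv ((n : ℤ) - j.val + i.val) n
  have h3 : (i : ℤ) - j - (((n : ℤ) - j.val + i.val) % n) =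
      n * (((n : ℤ) - j.val + i.val) / n) - n := by linarith
  rw [h3]
  exact dvd_sub (Dvd.intro _ rfl) dvd_rfl

open Finset in
lemma sum_nu (p : ℕ) [hp : Fact p.Prime] : ∀ s : ℕ, 1 ≤ s →
    ∑ k ∈ Finset.Ico 1 (p ^ s), (p : ℚ) ^ (2 * padicValNat p k) =
      (p : ℚ) ^ (s - 1) * ((p : ℚ) ^ s - 1) := by
  have hp1 : 1 < p := hp.out.one_lt
  refine Nat.le_induction ?_ ?_
  · -- base case s = 1
    have h1 : ∀ k ∈ Finset.Ico 1 (p ^ 1), (p : ℚ) ^ (2 * padicValNat p k) = 1 := by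
      intro k hk
      simp only [pow_one, Finset.mem_Ico] at hk
      rw [padicValNat.eq_zero_of_not_dvd (Nat.not_dvd_of_pos_of_lt (by omega) hk.2)]
      simp
    rw [Finset.sum_congr rfl h1]
    simp [Nat.card_Ico]
    push_cast [Nat.cast_sub hp1.le]
    ring
  · -- inductive step
    intro s hs IH
    rw [← Finset.sum_filter_add_sum_filter_not (Finset.Ico 1 (p ^ (s + 1))) (p ∣ ·)]
    have hA : ∑ k ∈ (Finset.Ico 1 (p ^ (s + 1))).filter (p ∣ ·),
        (p : ℚ) ^ (2 * padicValNat p k)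
        = (p : ℚ) ^ 2 * ∑ e ∈ Finset.Ico 1 (p ^ s), (p : ℚ) ^ (2 * padicValNat p e) := by
      rw [Finset.mul_sum]
      refine Finset.sum_nbij' (fun k => k / p) (fun e => p * e) ?_ ?_ ?_ ?_ ?_
      · intro k hk
        simp only [Finset.mem_filter, Finset.mem_Ico] at hk ⊢
        obtain ⟨⟨h1, h2⟩, c, rfl⟩ := hk
        rw [Nat.mul_div_cancel_left _ (by omega)]
        constructor
        · rcases Nat.eq_zero_or_pos c with rfl | h; · omega
          exact h
        · rw [pow_succ'] at h2
          exact lt_of_mul_lt_mul_left h2 (by omega)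
      · intro e he
        simp only [Finset.mem_filter, Finset.mem_Ico] at he ⊢
        refine ⟨⟨?_, ?_⟩, Dvd.intro _ rfl⟩
        · calc 1 ≤ e := he.1
          _ ≤ p * e := Nat.le_mul_of_pos_left e (by omega)
        · rw [pow_succ']
          exact mul_lt_mul_of_pos_left he.2 (by omega)
      · intro k hk
        simp only [Finset.mem_filter] at hk
        exact Nat.mul_div_cancel' hk.2
      · intro e he
        exact Nat.mul_div_cancel_left _ (by omega)
      · intro k hk
        simp only [Finset.mem_filter, Finset.mem_Ico] at hk
        obtain ⟨⟨h1, h2⟩, c, rfl⟩ := hk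
        have hc : c ≠ 0 := by rintro rfl; omega
        rw [show (p * c / p) = c from Nat.mul_div_cancel_left _ (by omega)]
        rw [padicValNat.mul (by omega) hc, padicValNat.self hp1]
        rw [← pow_add]
        congr 1
        ring
    have hcard : ((Finset.Ico 1 (p ^ (s + 1))).filter (p ∣ ·)).card = p ^ s - 1 := by
      have hIoc : Finset.Ico 1 (p ^ (s + 1)) = Finset.Ioc 0 (p ^ (s + 1) - 1) := by
        have h1 : 1 ≤ p ^ (s + 1) := Nat.one_le_pow _ _ (by omega)
        rw [← Finset.Icc_add_one_left_eq_Ioc, ← Finset.Ico_add_one_right_eq_Icc]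
        congr 1
        omega
      rw [hIoc, Nat.Ioc_filter_dvd_card_eq_div]
      have h2 : p ^ (s + 1) - 1 = (p - 1) + p * (p ^ s - 1) := by
        have hps : p ^ (s + 1) = p * p ^ s := pow_succ' p s
        have h3 : 1 ≤ p ^ s := Nat.one_le_pow _ _ (by omega)
        have h1' : 1 ≤ p ^ (s + 1) := Nat.one_le_pow _ _ (by omega)
        zify [h3, h1', hp1.le]
        have h4 : ((p : ℤ)) ^ (s + 1) = p * p ^ s := by exact_mod_cast hps
        rw [h4]; ring
      rw [h2, Nat.add_mul_div_left _ _ (by omega : 0 < p), Nat.div_eq_of_lt (by omega)]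
      omega
    have hB : ∑ k ∈ (Finset.Ico 1 (p ^ (s + 1))).filter (¬ p ∣ ·),
        (p : ℚ) ^ (2 * padicValNat p k) = (p : ℚ) ^ (s + 1) - (p : ℚ) ^ s := by
      have h1 : ∀ k ∈ (Finset.Ico 1 (p ^ (s + 1))).filter (¬ p ∣ ·),
          (p : ℚ) ^ (2 * padicValNat p k) = 1 := by
        intro k hk
        simp only [Finset.mem_filter] at hk
        rw [padicValNat.eq_zero_of_not_dvd hk.2]
        simp
      rw [Finset.sum_congr rfl h1, Finset.sum_const]
      have hcards := Finset.card_filter_add_card_filter_not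
        (s := Finset.Ico 1 (p ^ (s + 1))) (p := (p ∣ ·))
      beta_reduce at hcards
      rw [Nat.card_Ico] at hcards
      have h2 : 1 ≤ p ^ s := Nat.one_le_pow _ _ (by omega)
      have h3 : p ^ s ≤ p ^ (s + 1) := Nat.pow_le_pow_right (by omega) (by omega)
      have h4 : ((Finset.Ico 1 (p ^ (s + 1))).filter (¬ p ∣ ·)).card
          = p ^ (s + 1) - p ^ s := by omega
      rw [h4, nsmul_eq_mul, mul_one]
      push_cast [Nat.cast_sub h3]
      ring
    rw [hA, hB, IH]
    have e1 : (p : ℚ) ^ 2 * (p : ℚ) ^ (s - 1) = (p : ℚ) ^ (s + 1) := by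
      rw [← pow_add]
      congr 1
      omega
    have e2 : (p : ℚ) ^ (s + 1) = (p : ℚ) ^ s * p := pow_succ (p : ℚ) s
    have e3 : (s + 1 - 1) = s := by omega
    rw [e3, ← mul_assoc, e1, e2]
    ring

open Matrix in
lemma row_sum (p s : ℕ) (hp : p.Prime) (hs : 1 ≤ s) (i : Fin (p ^ s)) :
    ∑ j, Mpr p s i j = -((p : ℚ) ^ (s - 1)) := by
  haveI : Fact p.Prime := ⟨hp⟩
  haveI : NeZero (p ^ s) := ⟨pow_ne_zero _ hp.ne_zero⟩
  have hp1 : 1 < p := hp.one_lt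
  rw [← Equiv.sum_comp (Equiv.subLeft i) (fun j => Mpr p s i j)]
  have key : ∀ d : Fin (p ^ s), Mpr p s i (i - d) =
      if d.val = 0 then -(p : ℚ) ^ (2 * s - 1) else (p : ℚ) ^ (2 * padicValNat p d.val) := by
    intro d
    rcases eq_or_ne d 0 with rfl | hd
    · simp [Mpr]
    · have hdv : d.val ≠ 0 := fun h => hd (Fin.ext (by simp [h]))
      have hne : i ≠ i - d := by
        intro h
        exact hd (by simpa using (sub_eq_self.mp h.symm))
      rw [Mpr, if_neg hne, if_neg hdv]
      have ha : (i : ℤ) - ((i - d : Fin (p ^ s)) : ℤ) ≠ 0 := by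
        intro h
        apply hne
        have : (i : ℤ) = ((i - d : Fin (p ^ s)) : ℤ) := by linarith
        exact Fin.val_injective (by exact_mod_cast this)
      have hdvd : ((p : ℤ)) ^ s ∣ ((i : ℤ) - ((i - d : Fin (p ^ s)) : ℤ)) - (d.val : ℤ) := by
        have h1 := fin_sub_modeq (p ^ s) i (i - d)
        rw [sub_sub_cancel] at h1
        exact_mod_cast h1
      rw [valtrans (Nat.pos_of_ne_zero hdv) d.isLt hdvd ha]
  simp only [Equiv.subLeft_apply]
  rw [Finset.sum_congr rfl (fun d _ => key d)]
  rw [Fin.sum_univ_eq_sum_range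
    (fun k => if k = 0 then -(p : ℚ) ^ (2 * s - 1) else (p : ℚ) ^ (2 * padicValNat p k))]
  rw [Finset.range_eq_Ico, Finset.sum_eq_sum_Ico_succ_bot (Nat.pos_of_ne_zero (NeZero.ne _))]
  rw [if_pos rfl]
  have h1 : ∀ k ∈ Finset.Ico 1 (p ^ s),
      (if k = 0 then -(p : ℚ) ^ (2 * s - 1) else (p : ℚ) ^ (2 * padicValNat p k))
        = (p : ℚ) ^ (2 * padicValNat p k) := by
    intro k hk
    rw [Finset.mem_Ico] at hk
    rw [if_neg (by omega)]
  rw [Finset.sum_congr rfl h1, sum_nu p s hs]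
  have h2 : (p : ℚ) ^ (s - 1) * (p : ℚ) ^ s = (p : ℚ) ^ (2 * s - 1) := by
    rw [← pow_add]
    congr 1
    omega
  nlinarith [h2]

open Matrix in
/-- For a prime `p` and `s ≥ 1`, `M(p^s)` is invertible over `ℚ`, every row
sum of `M(p^s)⁻¹` equals `−p^{1−s}`, and the sum of all entries of `M(p^s)⁻¹` equals `−p`. -/
theorem stmt13 (p s : ℕ) (hp : p.Prime) (hs : 1 ≤ s) :
    IsUnit (Mpr p s) ∧
    (∀ i : Fin (p ^ s), ∑ j : Fin (p ^ s), (Mpr p s)⁻¹ i j = -(p : ℚ) ^ (1 - (s : ℤ))) ∧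
    (∑ i : Fin (p ^ s), ∑ j : Fin (p ^ s), (Mpr p s)⁻¹ i j = -(p : ℚ)) := by
  haveI : Fact p.Prime := ⟨hp⟩
  haveI : NeZero (p ^ s) := ⟨pow_ne_zero _ hp.ne_zero⟩
  haveI : Nonempty (Fin (p ^ s)) := ⟨0⟩
  have hp1 : 1 < p := hp.one_lt
  have hq0 : (p : ℚ) ≠ 0 := Nat.cast_ne_zero.mpr hp.ne_zero
  have hqpos : (0 : ℚ) < p := by positivity
  have hMd : ∀ i : Fin (p ^ s), Mpr p s i i = -(p : ℚ) ^ (2 * s - 1) := by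
    intro i; simp [Mpr]
  have hMoff : ∀ i j : Fin (p ^ s), i ≠ j → 0 < Mpr p s i j := by
    intro i j hij
    rw [Mpr, if_neg hij]
    positivity
  have hoffsum : ∀ i : Fin (p ^ s), ∑ j ∈ Finset.univ.erase i, Mpr p s i j
      = (p : ℚ) ^ (2 * s - 1) - (p : ℚ) ^ (s - 1) := by
    intro i
    have h1 := Finset.add_sum_erase Finset.univ (fun j => Mpr p s i j) (Finset.mem_univ i)
    beta_reduce at h1
    rw [row_sum p s hp hs i, hMd i] at h1
    linarith
  have hdet : (Mpr p s).det ≠ 0 := by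
    intro h
    obtain ⟨x, hx0, hxM⟩ := Matrix.exists_mulVec_eq_zero_iff.mpr h
    obtain ⟨i, -, hi⟩ := Finset.exists_max_image Finset.univ (fun j => |x j|)
      Finset.univ_nonempty
    have hxi : 0 < |x i| := by
      obtain ⟨j, hj⟩ := Function.ne_iff.mp hx0
      exact lt_of_lt_of_le (abs_pos.mpr hj) (hi j (Finset.mem_univ _))
    have h0 : ∑ j, Mpr p s i j * x j = 0 := by
      simpa [Matrix.mulVec, dotProduct] using congrFun hxM i
    have hsplit : Mpr p s i i * x i = -∑ j ∈ Finset.univ.erase i, Mpr p s i j * x j := by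
      have := Finset.add_sum_erase Finset.univ (fun j => Mpr p s i j * x j)
        (Finset.mem_univ i)
      beta_reduce at this
      rw [h0] at this
      linarith
    have habs : |Mpr p s i i * x i| ≤ ∑ j ∈ Finset.univ.erase i, Mpr p s i j * |x i| := by
      rw [hsplit, abs_neg]
      calc |∑ j ∈ Finset.univ.erase i, Mpr p s i j * x j|
          ≤ ∑ j ∈ Finset.univ.erase i, |Mpr p s i j * x j| :=
            Finset.abs_sum_le_sum_abs _ _
        _ ≤ ∑ j ∈ Finset.univ.erase i, Mpr p s i j * |x i| := by
            apply Finset.sum_le_sum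
            intro j hj
            rw [abs_mul]
            have hij : i ≠ j := fun h' => (Finset.mem_erase.mp hj).1 h'.symm
            have h2 := hMoff i j hij
            rw [abs_of_pos h2]
            exact mul_le_mul_of_nonneg_left (hi j (Finset.mem_univ _)) h2.le
    rw [← Finset.sum_mul, hoffsum i] at habs
    rw [hMd i, abs_mul, abs_neg, abs_pow, abs_of_pos hqpos] at habs
    have hspos : (0 : ℚ) < (p : ℚ) ^ (s - 1) := by positivity
    nlinarith
  have hUdet : IsUnit (Mpr p s).det := isUnit_iff_ne_zero.mpr hdet
  have hU : IsUnit (Mpr p s) := (Matrix.isUnit_iff_isUnit_det _).mpr hUdet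
  have hMinv : (Mpr p s)⁻¹ * Mpr p s = 1 := Matrix.nonsing_inv_mul _ hUdet
  have hones : Mpr p s *ᵥ (fun _ => (1 : ℚ)) = fun _ => -((p : ℚ) ^ (s - 1)) := by
    funext i
    simpa [Matrix.mulVec, dotProduct] using row_sum p s hp hs i
  have hz : (p : ℚ) ^ (1 - (s : ℤ)) = ((p : ℚ) ^ (s - 1))⁻¹ := by
    rw [show (1 - (s : ℤ)) = -(((s - 1 : ℕ)) : ℤ) by omega, _root_.zpow_neg, zpow_natCast]
  have hrowinv : ∀ i, ∑ j, (Mpr p s)⁻¹ i j = -(p : ℚ) ^ (1 - (s : ℤ)) := by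
    intro i
    have h1 : (Mpr p s)⁻¹ *ᵥ (Mpr p s *ᵥ fun _ => (1 : ℚ)) = fun _ => (1 : ℚ) := by
      rw [Matrix.mulVec_mulVec, hMinv, Matrix.one_mulVec]
    rw [hones] at h1
    have h2 := congrFun h1 i
    simp only [Matrix.mulVec, dotProduct] at h2
    have h3 : (∑ j, (Mpr p s)⁻¹ i j) * (-((p : ℚ) ^ (s - 1))) = 1 := by
      rw [Finset.sum_mul]
      exact h2
    have ha : -((p : ℚ) ^ (s - 1)) ≠ 0 := neg_ne_zero.mpr (pow_ne_zero _ hq0)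
    have h4 : ∑ j, (Mpr p s)⁻¹ i j = 1 / (-((p : ℚ) ^ (s - 1))) :=
      eq_div_of_mul_eq ha h3
    rw [h4, hz]
    rw [div_neg, one_div]
  refine ⟨hU, hrowinv, ?_⟩
  rw [Finset.sum_congr rfl (fun i _ => hrowinv i), Finset.sum_const, Finset.card_univ,
    Fintype.card_fin]
  have h5 : ((p : ℚ)) ^ s * (p : ℚ) ^ (1 - (s : ℤ)) = (p : ℚ) := by
    rw [← zpow_natCast (p : ℚ) s, ← zpow_add₀ hq0]
    rw [show (s : ℤ) + (1 - (s : ℤ)) = 1 by ring, zpow_one]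
  rw [nsmul_eq_mul]
  push_cast
  nlinarith [h5]
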